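/- There exists a universal constant c > 0 such that for every p ∈ ℕ and every polynomial q of degree ≤ p on the interval Î = [−1,1], c · ∑_{j=0}^{p} q(ξ_j^p)² η_j^p ≤ ‖q‖²_{L²(Î)} ≤ ∑_{j=0}^{p} q(ξ_j^p)² η_j^p, where {ξ_j^p} and {η_j^p} are the p+1 Gauss–Lobatto nodes and weights on Î. -/

import Mathlib

open Polynomial intervalIntegral
open scoped BigOperators


noncomputable def PI (P : ℝ[X]) : ℝ := ∫ x in (-1:ℝ)..1, P.eval x

lemma PI_intable (P : ℝ[X]) : IntervalIntegrable (fun x => P.eval x) MeasureTheory.volume (-1:ℝ) 1 :=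
  (P.continuous_aeval).intervalIntegrable _ _

lemma PI_add (P Q : ℝ[X]) : PI (P + Q) = PI P + PI Q := by
  unfold PI
  simp only [eval_add]
  exact integral_add (PI_intable P) (PI_intable Q)

lemma PI_sub (P Q : ℝ[X]) : PI (P - Q) = PI P - PI Q := by
  unfold PI
  simp only [eval_sub]
  exact integral_sub (PI_intable P) (PI_intable Q)

lemma PI_C_mul (a : ℝ) (P : ℝ[X]) : PI (C a * P) = a * PI P := by
  unfold PI
  simp only [eval_mul, eval_C]
  exact integral_const_mul a _

lemma PI_deriv (P : ℝ[X]) : PI (derivative P) = P.eval 1 - P.eval (-1) := by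
  unfold PI
  exact integral_deriv_eq_sub' (fun x => P.eval x)
    (funext fun x => P.deriv) (fun x _ => P.differentiableAt)
    ((derivative P).continuous_aeval).continuousOn

lemma PI_nonneg {P : ℝ[X]} (h : ∀ x ∈ Set.Icc (-1:ℝ) 1, 0 ≤ P.eval x) : 0 ≤ PI P :=
  intervalIntegral.integral_nonneg (by norm_num) h

lemma PI_mono {P Q : ℝ[X]} (h : ∀ x ∈ Set.Icc (-1:ℝ) 1, P.eval x ≤ Q.eval x) : PI P ≤ PI Q :=
  intervalIntegral.integral_mono_on (by norm_num) (PI_intable P) (PI_intable Q) h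

lemma PI_ibp (A B : ℝ[X]) :
    PI (derivative A * B) =
      A.eval 1 * B.eval 1 - A.eval (-1) * B.eval (-1) - PI (A * derivative B) := by
  have h := PI_deriv (A * B)
  rw [derivative_mul, PI_add] at h
  simp only [eval_mul] at h
  linarith




noncomputable def uP (p : ℕ) : ℝ[X] := ((X:ℝ[X])^2 - 1)^p

lemma uP_monic (p : ℕ) : (uP p).Monic := by
  have h : ((X:ℝ[X])^2 - 1).Monic := by
    have := monic_X_pow_sub_C (1:ℝ) (n := 2) (by norm_num)
    simpa using this
  exact h.pow p

lemma uP_natDegree (p : ℕ) : (uP p).natDegree = 2 * p := by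
  have h : ((X:ℝ[X])^2 - 1).natDegree = 2 := by
    have : ((X:ℝ[X])^2 - 1) = X^2 - C 1 := by simp
    rw [this, natDegree_X_pow_sub_C]
  rw [uP, natDegree_pow, h, mul_comm]

lemma uP_factor (p : ℕ) : ∀ k, k ≤ p →
    ∃ v : ℝ[X], derivative^[k] (uP p) = ((X:ℝ[X])^2 - 1)^(p - k) * v := by
  intro k
  induction k with
  | zero => intro _; exact ⟨1, by simp [uP]⟩
  | succ k ih =>
    intro hk
    obtain ⟨v, hv⟩ := ih (Nat.le_of_succ_le hk)
    obtain ⟨m, hm⟩ : ∃ m, p - k = m + 1 :=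
      ⟨p - k - 1, by omega⟩
    refine ⟨(((m:ℕ):ℝ[X]) + 1) * (derivative ((X:ℝ[X])^2 - 1)) * v + ((X:ℝ[X])^2 - 1) * derivative v, ?_⟩
    rw [Function.iterate_succ_apply', hv, hm, derivative_mul, derivative_pow]
    have hpk : p - (k+1) = m := by omega
    rw [hpk]
    push_cast
    simp only [map_add, map_one, Polynomial.C_eq_natCast]
    ring

lemma uP_boundary_eval {p k : ℕ} (hk : k < p) (x : ℝ) (hx : x^2 = 1) :
    (derivative^[k] (uP p)).eval x = 0 := by
  obtain ⟨v, hv⟩ := uP_factor p k (le_of_lt hk)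
  rw [hv]
  obtain ⟨m, hm⟩ : ∃ m, p - k = m + 1 := ⟨p - k - 1, by omega⟩
  simp [hm, hx]

lemma PI_iterate (p : ℕ) (g : ℝ[X]) : ∀ k, k ≤ p →
    PI (derivative^[p] (uP p) * g) =
      (-1:ℝ)^k * PI (derivative^[p - k] (uP p) * derivative^[k] g) := by
  intro k
  induction k with
  | zero => intro _; simp
  | succ k ih =>
    intro hk
    rw [ih (Nat.le_of_succ_le hk)]
    obtain ⟨m, hm⟩ : ∃ m, p - k = m + 1 := ⟨p - k - 1, by omega⟩
    have hmlt : m < p := by omega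
    have h1 : derivative^[p-k] (uP p) = derivative (derivative^[m] (uP p)) := by
      rw [hm, Function.iterate_succ_apply']
    have := PI_ibp (derivative^[m] (uP p)) (derivative^[k] g)
    rw [uP_boundary_eval hmlt 1 (by norm_num), uP_boundary_eval hmlt (-1) (by norm_num)] at this
    simp only [zero_mul, sub_zero, zero_sub] at this
    have hpk1 : p - (k+1) = m := by omega
    rw [h1, this, hpk1, Function.iterate_succ_apply']
    ring





-- the constant: PI one
lemma PI_one : PI 1 = 2 := by
  unfold PI; simp; norm_num

noncomputable def JJ (p : ℕ) : ℝ := PI ((1 - (X:ℝ[X])^2)^p)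

lemma JJ_zero : JJ 0 = 2 := by
  unfold JJ; simpa using PI_one

lemma JJ_succ (m : ℕ) : (2*(m:ℝ)+3) * JJ (m+1) = (2*(m:ℝ)+2) * JJ m := by
  have key : derivative ((X:ℝ[X]) * (1 - X^2)^(m+1)) =
      C (2*(m:ℝ)+3) * (1 - X^2)^(m+1) - C (2*(m:ℝ)+2) * (1 - X^2)^m := by
    rw [derivative_mul, derivative_pow, derivative_X]
    simp only [derivative_sub, derivative_one, derivative_X_pow, Polynomial.C_eq_natCast]
    have hpow : ((1:ℝ[X]) - X^2)^(m+1) = (1 - X^2)^m * (1 - X^2) := pow_succ _ _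
    rw [hpow]
    simp only [map_add, map_mul, map_ofNat, Polynomial.C_eq_natCast]
    push_cast
    ring
  have h0 := PI_deriv ((X:ℝ[X]) * (1 - X^2)^(m+1))
  rw [key] at h0
  rw [PI_sub, PI_C_mul, PI_C_mul] at h0
  simp only [eval_mul, eval_pow, eval_sub, eval_one, eval_X] at h0
  norm_num at h0
  unfold JJ
  linarith

lemma JJ_pos (p : ℕ) : 0 < JJ p := by
  induction p with
  | zero => rw [JJ_zero]; norm_num
  | succ m ih =>
    have h := JJ_succ m
    nlinarith [ih]

-- iterated derivative of uP at order 2p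
lemma uP_iterate_top (p : ℕ) :
    derivative^[2*p] (uP p) = C (Nat.factorial (2*p) : ℝ) := by
  ext n
  rw [Polynomial.coeff_iterate_derivative]
  rcases Nat.eq_zero_or_pos n with hn | hn
  · subst hn
    rw [coeff_C]
    simp only [if_pos rfl]
    have h1 : (uP p).coeff (0 + 2*p) = 1 := by
      rw [zero_add, ← uP_natDegree p]; exact (uP_monic p).coeff_natDegree
    rw [h1]
    simp [Nat.descFactorial_self]
  · have h2 : (uP p).coeff (n + 2*p) = 0 := by
      apply Polynomial.coeff_eq_zero_of_natDegree_lt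
      rw [uP_natDegree]; omega
    rw [h2, coeff_C, if_neg (by omega)]
    simp






lemma PI_zero : PI 0 = 0 := by unfold PI; simp

noncomputable def LP (p : ℕ) : ℝ[X] := derivative^[p] (uP p)
noncomputable def dP (p : ℕ) : ℝ := ((2*p).descFactorial p : ℝ)
noncomputable def Pl (p : ℕ) : ℝ[X] := C (1 / dP p) * LP p
noncomputable def kP (p : ℕ) : ℝ :=
  (Nat.factorial p : ℝ)^2 / (Nat.factorial (2*p) : ℝ) * JJ p

lemma dP_pos (p : ℕ) : 0 < dP p := by
  unfold dP
  have : (2*p).descFactorial p ≠ 0 := by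
    rw [Ne, Nat.descFactorial_eq_zero_iff_lt]; omega
  positivity

lemma LP_natDegree (p : ℕ) : (LP p).natDegree ≤ p := by
  have := Polynomial.natDegree_iterate_derivative (uP p) p
  rwa [uP_natDegree, show 2*p - p = p by omega] at this

lemma LP_coeff_p (p : ℕ) : (LP p).coeff p = dP p := by
  unfold LP dP
  rw [Polynomial.coeff_iterate_derivative]
  have h1 : (uP p).coeff (p + p) = 1 := by
    rw [show p + p = 2*p by ring, ← uP_natDegree p]
    exact (uP_monic p).coeff_natDegree
  rw [h1, show p + p = 2*p by ring]
  simp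

lemma LP_orth (p : ℕ) {g : ℝ[X]} (hg : derivative^[p] g = 0) : PI (LP p * g) = 0 := by
  have := PI_iterate p g p le_rfl
  rw [hg, Nat.sub_self, mul_zero, PI_zero, mul_zero] at this
  exact this

lemma LP_norm (p : ℕ) : PI (LP p * LP p) = (Nat.factorial (2*p) : ℝ) * JJ p := by
  have h := PI_iterate p (LP p) p le_rfl
  have h2 : derivative^[p] (LP p) = C (Nat.factorial (2*p) : ℝ) := by
    rw [LP, ← Function.iterate_add_apply, show p + p = 2*p by ring]
    exact uP_iterate_top p
  rw [Nat.sub_self, h2] at h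
  simp only [Function.iterate_zero_apply] at h
  rw [mul_comm (uP p) _, PI_C_mul] at h
  have h3 : PI (uP p) = (-1:ℝ)^p * JJ p := by
    have h4 : ((1:ℝ[X]) - X^2)^p = C ((-1:ℝ)^p) * uP p := by
      rw [uP, show (1 - (X:ℝ[X])^2) = -(X^2-1) by ring, neg_pow, map_pow, map_neg, map_one]
    have h5 : JJ p = (-1:ℝ)^p * PI (uP p) := by
      rw [JJ, h4, PI_C_mul]
    rw [h5, ← mul_assoc, ← mul_pow]
    norm_num
  have hsq : ((-1:ℝ)^p) * ((-1:ℝ)^p) = 1 := by rw [← mul_pow]; norm_num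
  simp only [LP] at h ⊢
  rw [h, h3]
  linear_combination ((Nat.factorial (2*p) : ℝ) * JJ p) * hsq

lemma dP_mul_factorial (p : ℕ) : dP p * (Nat.factorial p : ℝ) = (Nat.factorial (2*p) : ℝ) := by
  unfold dP
  have h := Nat.factorial_mul_descFactorial (n := 2*p) (k := p) (by omega)
  rw [show 2*p - p = p by omega] at h
  rw [← Nat.cast_mul, mul_comm]
  exact_mod_cast congrArg (Nat.cast (R := ℝ)) h

lemma Pl_coeff (p : ℕ) : (Pl p).coeff p = 1 := by
  rw [Pl, Polynomial.coeff_C_mul, LP_coeff_p, one_div, inv_mul_cancel₀ (ne_of_gt (dP_pos p))]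

lemma Pl_natDegree (p : ℕ) : (Pl p).natDegree ≤ p :=
  le_trans (Polynomial.natDegree_C_mul_le _ _) (LP_natDegree p)

lemma Pl_norm (p : ℕ) : PI (Pl p * Pl p) = kP p := by
  have h : Pl p * Pl p = C (1/dP p * (1/dP p)) * (LP p * LP p) := by
    rw [Pl, map_mul]; ring
  rw [h, PI_C_mul, LP_norm, kP]
  have hd := dP_mul_factorial p
  have hdp := dP_pos p
  have hfp : (0:ℝ) < (Nat.factorial p : ℝ) := by positivity
  have hf2p : (0:ℝ) < (Nat.factorial (2*p) : ℝ) := by positivity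
  have hdd : dP p = (Nat.factorial (2*p) : ℝ) / (Nat.factorial p : ℝ) := by
    rw [eq_div_iff (ne_of_gt hfp)]; exact hd
  rw [hdd]
  field_simp

lemma Pl_orth (p : ℕ) {s : ℝ[X]} (hs : derivative^[p] s = 0) : PI (Pl p * s) = 0 := by
  rw [Pl, mul_assoc, PI_C_mul, LP_orth p hs, mul_zero]

lemma kP_pos (p : ℕ) : 0 < kP p := by
  unfold kP
  have := JJ_pos p
  positivity

lemma kP_ratio (m : ℕ) : kP m ≤ 4 * kP (m+1) := by
  have h1 : (Nat.factorial (m+1) : ℝ) = ((m:ℝ)+1) * (Nat.factorial m : ℝ) := by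
    exact_mod_cast Nat.factorial_succ m
  have h2 : (Nat.factorial (2*(m+1)) : ℝ) =
      (2*(m:ℝ)+2) * ((2*(m:ℝ)+1) * (Nat.factorial (2*m) : ℝ)) := by
    rw [show 2*(m+1) = (2*m+1)+1 by ring, Nat.factorial_succ, Nat.factorial_succ]
    push_cast; ring
  have h3 : (2*(m:ℝ)+3) * JJ (m+1) = (2*(m:ℝ)+2) * JJ m := JJ_succ m
  have hJ := JJ_pos m
  have hJ1 := JJ_pos (m+1)
  have hfm : (0:ℝ) < (Nat.factorial m : ℝ) := by positivity
  have hf2m : (0:ℝ) < (Nat.factorial (2*m) : ℝ) := by positivity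
  have hJe : JJ (m+1) = (2*(m:ℝ)+2) * JJ m / (2*(m:ℝ)+3) := by
    rw [eq_div_iff (by positivity : (2*(m:ℝ)+3) ≠ 0)]
    linarith [h3]
  have key : kP (m+1) * ((2*(m:ℝ)+1)*(2*(m:ℝ)+3)) = kP m * ((m:ℝ)+1)^2 := by
    unfold kP
    rw [h1, h2, hJe]
    field_simp
  have hk := kP_pos m
  have hk1 := kP_pos (m+1)
  nlinarith [key, hk, hk1]




attribute [irreducible] Pl kP LP dP uP JJ

lemma coeff_cancel {f : ℝ[X]} {n : ℕ} (hn : 1 ≤ n) (hf : f.natDegree ≤ n)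
    (h0 : f.coeff n = 0) : f.natDegree ≤ n - 1 := by
  rw [Polynomial.natDegree_le_iff_coeff_eq_zero]
  intro N hN
  rcases eq_or_lt_of_le (show n ≤ N by omega) with h | h
  · rwa [← h]
  · exact Polynomial.coeff_eq_zero_of_natDegree_lt (lt_of_le_of_lt hf h)

set_option maxHeartbeats 2000000 in
/-- spectral equivalence of the Gauss–Lobatto discrete norm and
the `L²(-1,1)` norm on polynomials of degree `≤ p`, with constants independent
of `p`.  The Gauss–Lobatto rule with `p+1` nodes is characterized as the
quadrature rule whose nodes lie in `[-1,1]`, include both endpoints, and which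
is exact for polynomials of degree `≤ 2p−1`. -/
theorem stmt_8 :
    ∃ c : ℝ, 0 < c ∧
      ∀ p : ℕ, 1 ≤ p →
        ∀ (ξ η : Fin (p + 1) → ℝ),
          (∀ j, ξ j ∈ Set.Icc (-1 : ℝ) 1) →
          Function.Injective ξ →
          (∃ j, ξ j = -1) → (∃ j, ξ j = 1) →
          (∀ Q : Polynomial ℝ, Q.natDegree ≤ 2 * p - 1 →
            ∑ j, η j * Q.eval (ξ j) = ∫ x in (-1 : ℝ)..1, Q.eval x) →
          ∀ q : Polynomial ℝ, q.natDegree ≤ p →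
            c * (∑ j, η j * (q.eval (ξ j)) ^ 2) ≤ (∫ x in (-1 : ℝ)..1, (q.eval x) ^ 2) ∧
            (∫ x in (-1 : ℝ)..1, (q.eval x) ^ 2) ≤ ∑ j, η j * (q.eval (ξ j)) ^ 2 := by
  refine ⟨1/5, by norm_num, ?_⟩
  intro p hp ξ η hmem hinj hm1 h1 hexact q hq
  obtain ⟨jm, hjm⟩ := hm1
  obtain ⟨j1, hj1⟩ := h1
  have hne : j1 ≠ jm := by
    intro h; rw [h, hjm] at hj1; norm_num at hj1
  -- exactness in terms of PI
  have hexact' : ∀ Q : ℝ[X], Q.natDegree ≤ 2 * p - 1 →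
      ∑ j, η j * Q.eval (ξ j) = PI Q := fun Q hQ => hexact Q hQ
  -- the interior node set and nodal polynomial
  set S : Finset (Fin (p+1)) := Finset.univ.filter (fun j => ξ j ≠ 1 ∧ ξ j ≠ -1) with hSdef
  set ω : ℝ[X] := ∏ j ∈ S, (X - C (ξ j)) with hωdef
  have hmemS : ∀ j, j ∈ S ↔ ¬(j = j1 ∨ j = jm) := by
    intro j
    rw [hSdef, Finset.mem_filter]
    simp only [Finset.mem_univ, true_and]
    constructor
    · rintro ⟨ha, hb⟩ (rfl | rfl)
      exacts [ha hj1, hb hjm]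
    · intro h
      push_neg at h
      exact ⟨fun hh => h.1 (hinj (hh.trans hj1.symm)), fun hh => h.2 (hinj (hh.trans hjm.symm))⟩
  have hScard : S.card = p - 1 := by
    have hSeq : S = Finset.univ \ {j1, jm} := by
      ext j
      rw [hmemS j, Finset.mem_sdiff]
      simp [Finset.mem_insert]
    rw [hSeq, Finset.card_sdiff_of_subset (Finset.subset_univ _)]
    rw [Finset.card_insert_of_notMem (by simp [hne]), Finset.card_singleton]
    simp
  have hωmonic : ω.Monic := monic_prod_of_monic _ _ (fun j _ => monic_X_sub_C _)
  have hωdeg : ω.natDegree = p - 1 := by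
    rw [hωdef, Polynomial.natDegree_prod_of_monic _ _ (fun j _ => monic_X_sub_C _)]
    simp [natDegree_X_sub_C, hScard]
  have hωS : ∀ j : Fin (p+1), ξ j ≠ 1 → ξ j ≠ -1 → ω.eval (ξ j) = 0 := by
    intro j ha hb
    rw [hωdef, Polynomial.eval_prod]
    refine Finset.prod_eq_zero (Finset.mem_filter.mpr ⟨Finset.mem_univ j, ha, hb⟩) ?_
    simp
  -- the auxiliary monic polynomial π of degree p
  set π : ℝ[X] := (X + C 1) * ω with hπdef
  have hπmonic : π.Monic := (monic_X_add_C 1).mul hωmonic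
  have hπdeg : π.natDegree = p := by
    rw [hπdef, (monic_X_add_C 1).natDegree_mul hωmonic, natDegree_X_add_C, hωdeg]
    omega
  have hπcoeff : π.coeff p = 1 := by
    have := hπmonic.coeff_natDegree
    rwa [hπdeg] at this
  have hπeval : ∀ x : ℝ, π.eval x = (x + 1) * ω.eval x := by
    intro x; rw [hπdef]; simp
  have hπzero : ∀ j, j ≠ j1 → π.eval (ξ j) = 0 := by
    intro j hj
    rw [hπeval]
    by_cases hb : ξ j = -1
    · rw [hb]; ring
    · have ha : ξ j ≠ 1 := fun hh => hj (hinj (hh.trans hj1.symm))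
      rw [hωS j ha hb]; ring
  set a : ℝ := q.coeff p with hadef
  -- key exactness identity
  have hQdeg : (q*q - (C a * π) * (C a * π)).natDegree ≤ 2*p - 1 := by
    rw [Polynomial.natDegree_le_iff_coeff_eq_zero]
    intro N hN
    have hN2 : 2*p ≤ N := by omega
    rw [Polynomial.coeff_sub]
    rcases eq_or_lt_of_le hN2 with h | h
    · have e1 : (q*q).coeff N = a * a := by
        rw [← h, show 2*p = p + p by ring]
        rw [Polynomial.coeff_mul_add_eq_of_natDegree_le hq hq]
      have hCπ : (C a * π).natDegree ≤ p :=
        le_trans (Polynomial.natDegree_C_mul_le _ _) (le_of_eq hπdeg)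
      have e2 : ((C a * π) * (C a * π)).coeff N = a * a := by
        rw [← h, show 2*p = p + p by ring]
        rw [Polynomial.coeff_mul_add_eq_of_natDegree_le hCπ hCπ]
        rw [Polynomial.coeff_C_mul, hπcoeff]
        ring
      rw [e1, e2, sub_self]
    · have hd1 : (q*q).natDegree < N :=
        lt_of_le_of_lt (le_trans Polynomial.natDegree_mul_le (by omega : q.natDegree + q.natDegree ≤ 2*p)) h
      have hCπ : (C a * π).natDegree ≤ p :=
        le_trans (Polynomial.natDegree_C_mul_le _ _) (le_of_eq hπdeg)
      have hd2 : ((C a * π) * (C a * π)).natDegree < N :=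
        lt_of_le_of_lt (le_trans Polynomial.natDegree_mul_le (by omega)) h
      rw [Polynomial.coeff_eq_zero_of_natDegree_lt hd1,
        Polynomial.coeff_eq_zero_of_natDegree_lt hd2, sub_self]
  have hE := hexact' _ hQdeg
  have hsum : ∑ j, η j * ((q*q - (C a * π) * (C a * π)).eval (ξ j))
      = (∑ j, η j * (q.eval (ξ j))^2) - a^2 * ∑ j, η j * (π.eval (ξ j))^2 := by
    rw [Finset.mul_sum, ← Finset.sum_sub_distrib]
    apply Finset.sum_congr rfl
    intro j _
    simp only [Polynomial.eval_sub, Polynomial.eval_mul, Polynomial.eval_C]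
    ring
  have hCsq : PI ((C a * π) * (C a * π)) = a^2 * PI (π * π) := by
    have : (C a * π) * (C a * π) = C (a^2) * (π * π) := by
      rw [show (a:ℝ)^2 = a * a by ring, map_mul]; ring
    rw [this, PI_C_mul]
  rw [hsum, PI_sub, hCsq] at hE
  -- hE : A - a^2 * B = PI (q*q) - a^2 * PI (π*π)
  -- compute B
  have hB : ∑ j, η j * (π.eval (ξ j))^2 = η j1 * (2 * ω.eval 1)^2 := by
    rw [Finset.sum_eq_single_of_mem j1 (Finset.mem_univ j1)]
    · rw [hπeval, hj1]; norm_num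
    · intro j _ hj
      rw [hπzero j hj]; ring
  -- exactness for Q1
  set Q1 : ℝ[X] := (X + C 1) * (ω * ω) with hQ1def
  have hQ1deg : Q1.natDegree ≤ 2*p - 1 := by
    refine le_trans Polynomial.natDegree_mul_le ?_
    refine le_trans (add_le_add (le_of_eq (natDegree_X_add_C _)) Polynomial.natDegree_mul_le) ?_
    rw [hωdeg]; omega
  have hEQ1 := hexact' _ hQ1deg
  have hQ1sum : ∑ j, η j * (Q1.eval (ξ j)) = η j1 * (2 * (ω.eval 1)^2) := by
    rw [Finset.sum_eq_single_of_mem j1 (Finset.mem_univ j1)]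
    · rw [hQ1def]; simp only [Polynomial.eval_mul, Polynomial.eval_add, Polynomial.eval_X,
        Polynomial.eval_C, hj1]; ring
    · intro j _ hj
      by_cases hb : ξ j = -1
      · rw [hQ1def]; simp only [Polynomial.eval_mul, Polynomial.eval_add, Polynomial.eval_X,
          Polynomial.eval_C, hb]; ring
      · have ha : ξ j ≠ 1 := fun hh => hj (hinj (hh.trans hj1.symm))
        rw [hQ1def]; simp only [Polynomial.eval_mul, hωS j ha hb]; ring
  rw [hQ1sum] at hEQ1
  -- Δ = B - PI (π * π) = PI ((1 - X^2) * (ω * ω))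
  set Δ : ℝ := (∑ j, η j * (π.eval (ξ j))^2) - PI (π * π) with hΔdef
  have hΔeq : Δ = PI ((1 - (X:ℝ[X])^2) * (ω * ω)) := by
    have hpoly : (1 - (X:ℝ[X])^2) * (ω * ω) = C 2 * Q1 - π * π := by
      rw [hQ1def, hπdef]; ring_nf; simp [map_ofNat]; ring
    rw [hpoly, PI_sub, PI_C_mul, ← hEQ1, hΔdef, hB]
    ring
  have hΔnonneg : 0 ≤ Δ := by
    rw [hΔeq]
    apply PI_nonneg
    intro x hx
    simp only [Polynomial.eval_mul, Polynomial.eval_sub, Polynomial.eval_pow,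
      Polynomial.eval_one, Polynomial.eval_X]
    have h1x : x^2 ≤ 1 := by nlinarith [hx.1, hx.2]
    nlinarith [mul_self_nonneg (ω.eval x)]
  -- Δ ≤ kP (p-1)
  set r : ℝ[X] := Pl (p-1) - ω with hrdef
  have hrcoeff : r.coeff (p-1) = 0 := by
    rw [hrdef, Polynomial.coeff_sub, Pl_coeff]
    have : ω.coeff (p-1) = 1 := by
      have := hωmonic.coeff_natDegree
      rwa [hωdeg] at this
    rw [this]; ring
  have hrdeg : r.natDegree ≤ p - 1 :=
    le_trans (Polynomial.natDegree_sub_le _ _) (max_le (Pl_natDegree _) (le_of_eq hωdeg))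
  have hor : PI ((1 - (X:ℝ[X])^2) * (ω * r)) = 0 := by
    rcases eq_or_lt_of_le hp with hp1 | hp2
    · -- p = 1 : r = 0
      have hp1' : p = 1 := hp1.symm
      have h0 : r.natDegree ≤ 0 := by rw [hp1'] at hrdeg; simpa using hrdeg
      have hc0 : r.coeff 0 = 0 := by rw [hp1'] at hrcoeff; simpa using hrcoeff
      have hr0 : r = 0 := by
        rw [Polynomial.eq_C_of_natDegree_le_zero h0, hc0, map_zero]
      rw [hr0, mul_zero, mul_zero, PI_zero]
    · -- p ≥ 2
      have hrdeg2 : r.natDegree ≤ p - 2 := by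
        have := coeff_cancel (by omega : 1 ≤ p - 1) hrdeg hrcoeff
        omega
      have hQ2deg : ((1 - (X:ℝ[X])^2) * (ω * r)).natDegree ≤ 2*p - 1 := by
        refine le_trans Polynomial.natDegree_mul_le ?_
        have h1 : ((1:ℝ[X]) - X^2).natDegree ≤ 2 := by
          refine le_trans (Polynomial.natDegree_sub_le _ _) ?_
          simp [Polynomial.natDegree_X_pow]
        refine le_trans (add_le_add h1 Polynomial.natDegree_mul_le) ?_
        rw [hωdeg]
        omega
      have hE2 := hexact' _ hQ2deg
      have hz : ∑ j, η j * (((1 - (X:ℝ[X])^2) * (ω * r)).eval (ξ j)) = 0 := by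
        apply Finset.sum_eq_zero
        intro j _
        by_cases ha : ξ j = 1
        · simp [ha]
        · by_cases hb : ξ j = -1
          · simp [hb]
          · simp [hωS j ha hb]
      rw [hz] at hE2
      exact hE2.symm
  have hΔle : Δ ≤ kP (p-1) := by
    have hexpand : (1 - (X:ℝ[X])^2) * (Pl (p-1) * Pl (p-1))
        = (1 - (X:ℝ[X])^2) * (ω * ω) + C 2 * ((1 - (X:ℝ[X])^2) * (ω * r))
          + (1 - (X:ℝ[X])^2) * (r * r) := by
      have hPl : Pl (p-1) = ω + r := by rw [hrdef]; ring
      rw [hPl]; ring_nf; simp [map_ofNat]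
    have h3 : PI ((1 - (X:ℝ[X])^2) * (Pl (p-1) * Pl (p-1)))
        = Δ + PI ((1 - (X:ℝ[X])^2) * (r * r)) := by
      rw [hexpand, PI_add, PI_add, PI_C_mul, hor, hΔeq]; ring
    have h4 : 0 ≤ PI ((1 - (X:ℝ[X])^2) * (r * r)) := by
      apply PI_nonneg
      intro x hx
      simp only [Polynomial.eval_mul, Polynomial.eval_sub, Polynomial.eval_pow,
        Polynomial.eval_one, Polynomial.eval_X]
      have h1x : x^2 ≤ 1 := by nlinarith [hx.1, hx.2]
      nlinarith [mul_self_nonneg (r.eval x)]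
    have h5 : PI ((1 - (X:ℝ[X])^2) * (Pl (p-1) * Pl (p-1))) ≤ PI (Pl (p-1) * Pl (p-1)) := by
      apply PI_mono
      intro x hx
      simp only [Polynomial.eval_mul, Polynomial.eval_sub, Polynomial.eval_pow,
        Polynomial.eval_one, Polynomial.eval_X]
      nlinarith [mul_self_nonneg ((Pl (p-1)).eval x), sq_nonneg x]
    rw [Pl_norm] at h5
    linarith
  have hΔle4 : Δ ≤ 4 * kP p := by
    have := kP_ratio (p-1)
    rw [show p - 1 + 1 = p by omega] at this
    linarith
  -- lower bound : a^2 * kP p ≤ PI (q * q)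
  set s : ℝ[X] := q - C a * Pl p with hsdef
  have hscoeff : s.coeff p = 0 := by
    rw [hsdef, Polynomial.coeff_sub, Polynomial.coeff_C_mul, Pl_coeff, hadef]
    ring
  have hsdeg : s.natDegree ≤ p :=
    le_trans (Polynomial.natDegree_sub_le _ _)
      (max_le hq (le_trans (Polynomial.natDegree_C_mul_le _ _) (Pl_natDegree _)))
  have hsdeg' : s.natDegree ≤ p - 1 := coeff_cancel hp hsdeg hscoeff
  have hDs : derivative^[p] s = 0 :=
    Polynomial.iterate_derivative_eq_zero (lt_of_le_of_lt hsdeg' (by omega))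
  have horths : PI (Pl p * s) = 0 := Pl_orth p hDs
  have hqq : q * q = C (a^2) * (Pl p * Pl p) + C (2*a) * (Pl p * s) + s * s := by
    have hqe : q = C a * Pl p + s := by rw [hsdef]; ring
    rw [hqe, show (a:ℝ)^2 = a*a by ring, map_mul, show (2*a : ℝ) = a + a by ring, map_add]
    ring
  have hssnonneg : 0 ≤ PI (s * s) := by
    apply PI_nonneg
    intro x _
    simp only [Polynomial.eval_mul]
    exact mul_self_nonneg _
  have hlow : a^2 * kP p ≤ PI (q * q) := by
    rw [hqq, PI_add, PI_add, PI_C_mul, PI_C_mul, Pl_norm, horths]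
    linarith
  -- put everything together
  have hkey : (∑ j, η j * (q.eval (ξ j))^2) = PI (q*q) + a^2 * Δ := by
    rw [hΔdef]; linarith [hE]
  have hupper : PI (q*q) ≤ ∑ j, η j * (q.eval (ξ j))^2 := by
    rw [hkey]
    nlinarith [sq_nonneg a, hΔnonneg]
  have hlower : (1/5 : ℝ) * (∑ j, η j * (q.eval (ξ j))^2) ≤ PI (q*q) := by
    rw [hkey]
    have h1 : a^2 * Δ ≤ a^2 * (4 * kP p) := by
      apply mul_le_mul_of_nonneg_left hΔle4 (sq_nonneg a)
    have h2 : a^2 * (4 * kP p) ≤ 4 * PI (q*q) := by nlinarith [hlow]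
    nlinarith
  have hIq : PI (q*q) = ∫ x in (-1:ℝ)..1, (q.eval x)^2 := by
    unfold PI
    refine intervalIntegral.integral_congr ?_
    intro x _
    simp [Polynomial.eval_mul, sq]
  rw [hIq] at hupper hlower
  exact ⟨hlower, hupper⟩
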